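/- Lower bound on dynamic positions in any put-based superhedge: Let 𝔓 ⊆ Ω be closed and let G : ℝ₊^n → [−∞, ∞) satisfy G(s₁,…,s_n) ≤ K(1 + s₁ + … + s_n) for some constant K. Define β_i : ℝ₊^i → ℝ recursively by β_n ≡ 0 and β_i(s₁,…,s_i) = max(0, sup_{s_{i+2},…,s_n ∈ ℝ₊} limsup_{x→∞} [ (β_{i+1}(s₁,…,s_i,x) + G(s₁,…,s_i,x,s_{i+2},…,s_n)/x) · 1_𝔓(s₁,…,s_i,x,s_{i+2},…,s_n) ]) for i = n−1,…,0. If (X, Δ) is an admissible put-based semi-static strategy whose payoff satisfies X(s₁,…,s_n) + Σ_{i=0}^{n−1} Δ_i(s₁,…,s_i)(s_{i+1} − s_i) ≥ G(s₁,…,s_n) for all (s₁,…,s_n) ∈ 𝔓, then Δ_i(s₁,…,s_i) ≥ β_i(s₁,…,s_i) for every i = 0,…,n−1 and every (s₁,…,s_i) ∈ ℝ₊^i. -/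

import Mathlib

open MeasureTheory Set Filter Topology
open scoped ENNReal NNReal Classical

noncomputable section

namespace RobustFin

/-- Canonical path space: the values `S₀, S₁, …, S_n` of the asset. -/
abbrev Path (n : ℕ) := Fin (n + 1) → ℝ

/-- Paths starting at `s₀` with nonnegative coordinates: the canonical space `Ω`. -/
def Omega (n : ℕ) (s₀ : ℝ) : Set (Path n) := {ω | ω 0 = s₀ ∧ ∀ i, 0 ≤ ω i}

/-- The first `j` coordinates `S₁, …, S_j` of a path. -/
def restr {n : ℕ} (j : Fin n) (ω : Path n) : Fin j → ℝ :=
  fun i => ω ⟨(i : ℕ) + 1, by have h1 := i.isLt; have h2 := j.isLt; omega⟩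

/-- The coordinates `S₁, …, S_n` of a path. -/
def tailCoords {n : ℕ} (ω : Path n) : Fin n → ℝ := fun i => ω i.succ

/-- A dynamic trading strategy: bounded measurable positions `Δ_j(S₁,…,S_j)`. -/
structure Dyn (n : ℕ) where
  pos : (j : Fin n) → (Fin j → ℝ) → ℝ
  meas : ∀ j, Measurable (pos j)
  bdd : ∀ j, ∃ C, ∀ x, |pos j x| ≤ C

/-- No short selling: all dynamic positions are nonnegative. -/
def Dyn.Nonneg {n : ℕ} (D : Dyn n) : Prop := ∀ j x, 0 ≤ D.pos j x

/-- Gains from dynamic trading: `Σ_j Δ_j(S₁,…,S_j)(S_{j+1} − S_j)`. -/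
def Dyn.gains {n : ℕ} (D : Dyn n) (ω : Path n) : ℝ :=
  ∑ j : Fin n, D.pos j (restr j ω) * (ω j.succ - ω j.castSucc)

/-- A static option portfolio: a constant (cash) position plus a finite linear
combination of options with maturity indices `idx` and nonnegative strikes. -/
structure Static (n : ℕ) where
  const : ℝ
  m : ℕ
  coeff : Fin m → ℝ
  idx : Fin m → Fin n
  strike : Fin m → ℝ
  strike_nonneg : ∀ k, 0 ≤ strike k

/-- Payoff of the portfolio when the options are call options. -/
def Static.callPayoff {n : ℕ} (X : Static n) (ω : Path n) : ℝ :=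
  X.const + ∑ k, X.coeff k * max (ω (X.idx k).succ - X.strike k) 0

/-- Payoff of the portfolio when the options are put options. -/
def Static.putPayoff {n : ℕ} (X : Static n) (ω : Path n) : ℝ :=
  X.const + ∑ k, X.coeff k * max (X.strike k - ω (X.idx k).succ) 0

/-- Price of a static portfolio, given the unit option prices `c i K`;
this is the (unique) linear pricing functional determined by the prices. -/
def Static.price {n : ℕ} (X : Static n) (c : Fin n → ℝ → ℝ) : ℝ :=
  X.const + ∑ k, X.coeff k * c (X.idx k) (X.strike k)

/-- Expectation of a real payoff, valued in `EReal`, with the convention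
`∞ − ∞ = −∞` (in `EReal`, `⊤ - ⊤ = ⊥`). -/
def eexp {n : ℕ} (P : Measure (Path n)) (f : Path n → ℝ) : EReal :=
  ((∫⁻ ω, ENNReal.ofReal (f ω) ∂P : ℝ≥0∞) : EReal) -
    ((∫⁻ ω, ENNReal.ofReal (-(f ω)) ∂P : ℝ≥0∞) : EReal)

/-- The positive part of an extended real number, in `ℝ≥0∞`. -/
def posE (x : EReal) : ℝ≥0∞ := if x = ⊤ then ⊤ else ENNReal.ofReal x.toReal

/-- Expectation of an `EReal`-valued payoff, with the convention `∞ − ∞ = −∞`. -/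
def eexpE {n : ℕ} (P : Measure (Path n)) (f : Path n → EReal) : EReal :=
  ((∫⁻ ω, posE (f ω) ∂P : ℝ≥0∞) : EReal) - ((∫⁻ ω, posE (-(f ω)) ∂P : ℝ≥0∞) : EReal)

/-- A market calibrated model for the market with static payoffs `pay` (calls or puts),
prices `c` and prediction set `P`. -/
def Calibrated {n : ℕ} (pay : Static n → Path n → ℝ) (c : Fin n → ℝ → ℝ)
    (P : Set (Path n)) (Q : Measure (Path n)) : Prop :=
  IsProbabilityMeasure Q ∧ Q P = 1 ∧
    ∀ (X : Static n) (D : Dyn n), D.Nonneg →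
      eexp Q (fun ω => pay X ω + D.gains ω) ≤ (X.price c : EReal)

/-- A weak free lunch with vanishing risk. -/
def WFLVR {n : ℕ} (pay : Static n → Path n → ℝ) (c : Fin n → ℝ → ℝ)
    (P : Set (Path n)) : Prop :=
  ∃ (Xs : ℕ → Static n) (Ds : ℕ → Dyn n) (X : Static n) (D : Dyn n) (L : ℝ),
    (∀ k, (Ds k).Nonneg) ∧ D.Nonneg ∧
    (∀ ω ∈ P, Tendsto (fun k => pay (Xs k) ω + (Ds k).gains ω) atTop (nhds 0)) ∧
    (∀ k, ∀ ω ∈ P, pay X ω + D.gains ω ≤ pay (Xs k) ω + (Ds k).gains ω) ∧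
    Tendsto (fun k => (Xs k).price c) atTop (nhds L) ∧ L < 0

/-- A robust uniformly strong arbitrage. -/
def RobustArbitrage {n : ℕ} (pay : Static n → Path n → ℝ) (c : Fin n → ℝ → ℝ)
    (P : Set (Path n)) : Prop :=
  ∃ (X : Static n) (D : Dyn n), D.Nonneg ∧ X.price c < 0 ∧
    ∀ ω ∈ P, 0 ≤ pay X ω + D.gains ω

/-- The superhedging price of `G` over semi-static strategies (no short selling). -/
def V {n : ℕ} (pay : Static n → Path n → ℝ) (c : Fin n → ℝ → ℝ)
    (P : Set (Path n)) (G : Path n → EReal) : EReal :=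
  sInf {q : EReal | ∃ (X : Static n) (D : Dyn n), D.Nonneg ∧ q = (X.price c : EReal) ∧
    ∀ ω ∈ P, G ω ≤ ((pay X ω + D.gains ω : ℝ) : EReal)}

/-- The superhedging price of `G` when the dynamic positions may take both signs. -/
def Vsigned {n : ℕ} (pay : Static n → Path n → ℝ) (c : Fin n → ℝ → ℝ)
    (P : Set (Path n)) (G : Path n → EReal) : EReal :=
  sInf {q : EReal | ∃ (X : Static n) (D : Dyn n), q = (X.price c : EReal) ∧
    ∀ ω ∈ P, G ω ≤ ((pay X ω + D.gains ω : ℝ) : EReal)}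

/-- `Π_μ`: probability measures on the path space with marginals `δ_{s₀}, μ₁, …, μ_n`. -/
def PiMu {n : ℕ} (s₀ : ℝ) (μ : Fin n → Measure ℝ) : Set (Measure (Path n)) :=
  {π | IsProbabilityMeasure π ∧ π (Omega n s₀) = 1 ∧
       ∀ i : Fin n, π.map (fun ω => ω i.succ) = μ i}

/-- The coordinate process is a supermartingale in its natural filtration:
for every Borel `A ⊆ ℝ₊^j`, `∫ 1_A(S₁,…,S_j)(S_{j+1} − S_j) dπ ≤ 0`. -/
def IsSupermartingaleLaw {n : ℕ} (π : Measure (Path n)) : Prop :=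
  ∀ (j : Fin n) (A : Set (Fin j → ℝ)), MeasurableSet A →
    ∫ ω, Set.indicator A (fun _ => (1 : ℝ)) (restr j ω) * (ω j.succ - ω j.castSucc) ∂π ≤ 0

/-- `M⁻_μ`: calibrated supermartingale measures. -/
def MSet {n : ℕ} (s₀ : ℝ) (μ : Fin n → Measure ℝ) : Set (Measure (Path n)) :=
  {π ∈ PiMu s₀ μ | IsSupermartingaleLaw π}

/-- `M⁻_{μ,𝔓}`: calibrated supermartingale measures giving full mass to `P`. -/
def MSetP {n : ℕ} (s₀ : ℝ) (μ : Fin n → Measure ℝ) (P : Set (Path n)) :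
    Set (Measure (Path n)) :=
  {π ∈ MSet s₀ μ | π P = 1}

/-- Assumption A on the marginals. -/
def AssumptionA {n : ℕ} (s₀ : ℝ) (μ : Fin n → Measure ℝ) : Prop :=
  (∀ i, ∫ x, x ∂(μ i) ≤ s₀) ∧
  (∀ i j : Fin n, i ≤ j → ∫ x, x ∂(μ j) ≤ ∫ x, x ∂(μ i)) ∧
  (∀ φ : ℝ → ℝ, ConcaveOn ℝ Set.univ φ → Monotone φ → (∀ x, 0 ≤ φ x) →
    ∀ i j : Fin n, i ≤ j → ∫ x, φ x ∂(μ j) ≤ ∫ x, φ x ∂(μ i))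

/-- Condition C (i): each `c_i` is nonnegative, convex and nonincreasing on `ℝ₊`. -/
def CondC1 {n : ℕ} (c : Fin n → ℝ → ℝ) : Prop :=
  ∀ i, (∀ x, 0 ≤ x → 0 ≤ c i x) ∧ ConvexOn ℝ (Set.Ici 0) (c i) ∧ AntitoneOn (c i) (Set.Ici 0)

/-- Condition C (ii): `s₀ ≥ c₁(0) ≥ … ≥ c_n(0) ≥ 0` and `c_i'(0+) ≥ −1`
(the latter expressed, for convex `c_i`, through the slopes at `0`). -/
def CondC2 {n : ℕ} (s₀ : ℝ) (c : Fin n → ℝ → ℝ) : Prop :=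
  (∀ i, c i 0 ≤ s₀) ∧ (∀ i j : Fin n, i ≤ j → c j 0 ≤ c i 0) ∧ (∀ i, 0 ≤ c i 0) ∧
    (∀ i, ∀ K : ℝ, 0 < K → c i 0 - K ≤ c i K)

/-- Condition C (iii): `c_i(K) → 0` as `K → ∞`. -/
def CondC3 {n : ℕ} (c : Fin n → ℝ → ℝ) : Prop :=
  ∀ i, Tendsto (c i) atTop (nhds 0)

/-- Condition C (iv): for every `x ≥ 0`, `c_i(0) − c_i(x)` is nonincreasing in `i`. -/
def CondC4 {n : ℕ} (c : Fin n → ℝ → ℝ) : Prop :=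
  ∀ x : ℝ, 0 ≤ x → ∀ i j : Fin n, i ≤ j → c j 0 - c j x ≤ c i 0 - c i x

/-- Condition C. -/
def CondC {n : ℕ} (s₀ : ℝ) (c : Fin n → ℝ → ℝ) : Prop :=
  CondC1 c ∧ CondC2 s₀ c ∧ CondC3 c ∧ CondC4 c

/-- Condition P (i). -/
def CondP1 {n : ℕ} (p : Fin n → ℝ → ℝ) : Prop :=
  ∀ i, (∀ x, 0 ≤ x → 0 ≤ p i x) ∧ ConvexOn ℝ (Set.Ici 0) (p i) ∧ MonotoneOn (p i) (Set.Ici 0)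

/-- Condition P (ii): `s₀ ≥ lim (x − p₁(x)) ≥ … ≥ 0` and `0 ≤ p_i'(0+) ≤ 1`. -/
def CondP2 {n : ℕ} (s₀ : ℝ) (p : Fin n → ℝ → ℝ) : Prop :=
  (∃ L : Fin n → ℝ,
    (∀ i, Tendsto (fun x => x - p i x) atTop (nhds (L i))) ∧
    (∀ i, L i ≤ s₀) ∧ (∀ i j : Fin n, i ≤ j → L j ≤ L i) ∧ (∀ i, 0 ≤ L i)) ∧
  (∃ d : Fin n → ℝ,
    (∀ i, Tendsto (fun K => (p i K - p i 0) / K) (nhdsWithin 0 (Set.Ioi 0)) (nhds (d i))) ∧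
    (∀ i, 0 ≤ d i ∧ d i ≤ 1))

/-- Condition P (iii): `p_i(K) → 0` as `K → 0` (within `ℝ₊`). -/
def CondP3 {n : ℕ} (p : Fin n → ℝ → ℝ) : Prop :=
  ∀ i, Tendsto (p i) (nhdsWithin 0 (Set.Ici 0)) (nhds 0)

/-- Condition P (iv): `p_i(x)` is nondecreasing in `i`. -/
def CondP4 {n : ℕ} (p : Fin n → ℝ → ℝ) : Prop :=
  ∀ x : ℝ, 0 ≤ x → ∀ i j : Fin n, i ≤ j → p i x ≤ p j x

/-- Condition P. -/
def CondP {n : ℕ} (s₀ : ℝ) (p : Fin n → ℝ → ℝ) : Prop :=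
  CondP1 p ∧ CondP2 s₀ p ∧ CondP3 p ∧ CondP4 p

/-- The measures `μ_i` defined from the put prices by `μ_i([0,K]) = p_i'(K)`;
equivalently, `p_i(K) = ∫ (K − x)⁺ μ_i(dx)`. -/
def PutPricesFrom {n : ℕ} (p : Fin n → ℝ → ℝ) (μ : Fin n → Measure ℝ) : Prop :=
  (∀ i, IsProbabilityMeasure (μ i)) ∧ (∀ i, μ i (Set.Iio 0) = 0) ∧
  (∀ i, Integrable (fun x => x) (μ i)) ∧
  (∀ i, ∀ K : ℝ, 0 ≤ K → p i K = ∫ x, max (K - x) 0 ∂(μ i))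

/-- The path `(s₀, s₁, …, s_i, x, s_{i+2}, …, s_n)`. -/
def mkPath {n : ℕ} (s₀ : ℝ) (i : Fin n) (s : Fin i → ℝ) (x : ℝ)
    (t : Fin (n - ((i : ℕ) + 1)) → ℝ) : Path n := fun j =>
  if h0 : (j : ℕ) = 0 then s₀
  else if h1 : (j : ℕ) ≤ (i : ℕ) then
    s ⟨(j : ℕ) - 1, by have := j.isLt; have := i.isLt; omega⟩
  else if h2 : (j : ℕ) = (i : ℕ) + 1 then x
  else t ⟨(j : ℕ) - (i : ℕ) - 2, by have := j.isLt; have := i.isLt; omega⟩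

/-- The family `β_i : ℝ₊^i → ℝ` defined recursively by `β_n = 0` and
`β_i(s₁,…,s_i) = (sup_{s_{i+2},…,s_n} limsup_{x→∞} ((β_{i+1}(s₁,…,s_i,x)
 + G(s₁,…,s_i,x,s_{i+2},…,s_n)/x)·1_𝔓)) ∨ 0`. -/
def IsBetaFamily {n : ℕ} (s₀ : ℝ) (P : Set (Path n)) (G : (Fin n → ℝ) → EReal)
    (β : (i : Fin (n + 1)) → (Fin i → ℝ) → ℝ) : Prop :=
  (∀ s, β (Fin.last n) s = 0) ∧
  ∀ (i : Fin n) (s : Fin i → ℝ), (∀ k, 0 ≤ s k) →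
    (β ⟨(i : ℕ), by have := i.isLt; omega⟩ s : EReal) =
      max 0 (⨆ (t : Fin (n - ((i : ℕ) + 1)) → ℝ) (_ : ∀ k, 0 ≤ t k),
        Filter.limsup (fun x : ℝ =>
          if mkPath s₀ i s x t ∈ P then
            ((β ⟨(i : ℕ) + 1, by have := i.isLt; omega⟩ (Fin.snoc s x) : ℝ) : EReal)
              + G (tailCoords (mkPath s₀ i s x t)) * ((x⁻¹ : ℝ) : EReal)
          else 0) Filter.atTop)

/-- Gains of the dynamic strategy `(β_i)`: `β₀(S₁ − s₀) + Σ_i β_i(S₁,…,S_i)(S_{i+1} − S_i)`. -/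
def gainsOf {n : ℕ} (β : (i : Fin (n + 1)) → (Fin i → ℝ) → ℝ) (ω : Path n) : ℝ :=
  ∑ j : Fin n, β ⟨(j : ℕ), by have := j.isLt; omega⟩ (restr j ω) * (ω j.succ - ω j.castSucc)

/-- The penalty function `λ_𝔓(s₁,…,s_n) = (1 + s₁ + … + s_n)·1{(s₁,…,s_n) ∉ 𝔓}`. -/
def lambdaP {n : ℕ} (P : Set (Path n)) (ω : Path n) : ℝ :=
  if ω ∈ P then 0 else 1 + ∑ i : Fin n, ω i.succ

/-- `min(s₀, s₁, …, s_m)`. -/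
def pmin {m : ℕ} (s₀ : ℝ) (s : Fin m → ℝ) : ℝ :=
  Finset.univ.inf' Finset.univ_nonempty
    (fun j : Fin (m + 1) =>
      if h : (j : ℕ) = 0 then s₀ else s ⟨(j : ℕ) - 1, by have := j.isLt; omega⟩)

/-- `max(s₀, s₁, …, s_m)`. -/
def pmax {m : ℕ} (s₀ : ℝ) (s : Fin m → ℝ) : ℝ :=
  Finset.univ.sup' Finset.univ_nonempty
    (fun j : Fin (m + 1) =>
      if h : (j : ℕ) = 0 then s₀ else s ⟨(j : ℕ) - 1, by have := j.isLt; omega⟩)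


private lemma mkPath_nonneg {n : ℕ} {s₀ : ℝ} (hs₀ : 0 ≤ s₀) (i : Fin n)
    {s : Fin i → ℝ} (hs : ∀ k, 0 ≤ s k) {x : ℝ} (hx : 0 ≤ x)
    {t : Fin (n - ((i : ℕ) + 1)) → ℝ} (ht : ∀ k, 0 ≤ t k) (j : Fin (n + 1)) :
    0 ≤ mkPath s₀ i s x t j := by
  unfold mkPath
  split_ifs <;> first | exact hs₀ | exact hs _ | exact hx | exact ht _

private lemma mkPath_le {n : ℕ} {s₀ : ℝ} (i : Fin n)
    {s : Fin i → ℝ} (hs : ∀ k, 0 ≤ s k) (x : ℝ)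
    {t : Fin (n - ((i : ℕ) + 1)) → ℝ} (ht : ∀ k, 0 ≤ t k) (hs₀ : 0 ≤ s₀)
    (j : Fin (n + 1)) (hj : (j : ℕ) ≠ (i : ℕ) + 1) :
    mkPath s₀ i s x t j ≤ s₀ + (∑ k, s k) + ∑ k, t k := by
  have hsum1 : 0 ≤ ∑ k, s k := Finset.sum_nonneg fun k _ => hs k
  have hsum2 : 0 ≤ ∑ k, t k := Finset.sum_nonneg fun k _ => ht k
  unfold mkPath
  split_ifs with h0 h1 h2
  · linarith
  · have := Finset.single_le_sum (fun k (_ : k ∈ Finset.univ) => hs k)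
      (Finset.mem_univ (⟨(j : ℕ) - 1, by have := j.isLt; have := i.isLt; omega⟩ : Fin i))
    linarith
  · have := Finset.single_le_sum (fun k (_ : k ∈ Finset.univ) => ht k)
      (Finset.mem_univ (⟨(j : ℕ) - (i : ℕ) - 2, by have := j.isLt; have := i.isLt; omega⟩ :
        Fin (n - ((i : ℕ) + 1))))
    linarith

private lemma mkPath_val_succ {n : ℕ} (s₀ : ℝ) (i : Fin n) (s : Fin i → ℝ) (x : ℝ)
    (t : Fin (n - ((i : ℕ) + 1)) → ℝ) (j : Fin (n + 1)) (hj : (j : ℕ) = (i : ℕ) + 1) :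
    mkPath s₀ i s x t j = x := by
  unfold mkPath
  rw [dif_neg (by omega), dif_neg (by omega), dif_pos hj]

private lemma mkPath_val_two {n : ℕ} (s₀ : ℝ) (i : Fin n) (s : Fin i → ℝ) (x : ℝ)
    (t : Fin (n - ((i : ℕ) + 1)) → ℝ) (j : Fin (n + 1)) (hj : (j : ℕ) = (i : ℕ) + 2)
    (h : (i : ℕ) + 1 < n) :
    mkPath s₀ i s x t j = t ⟨0, by omega⟩ := by
  unfold mkPath
  rw [dif_neg (by omega), dif_neg (by omega), dif_neg (by omega)]
  congr 1
  apply Fin.ext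
  show (j : ℕ) - (i : ℕ) - 2 = 0
  omega

private lemma mkPath_eq_s {n : ℕ} (s₀ : ℝ) (i : Fin n) (s : Fin i → ℝ) (x : ℝ)
    (t : Fin (n - ((i : ℕ) + 1)) → ℝ) (j : Fin (n + 1)) (h0 : (j : ℕ) ≠ 0)
    (h1 : (j : ℕ) ≤ (i : ℕ)) (k : Fin (i : ℕ)) (hk : (k : ℕ) + 1 = (j : ℕ)) :
    mkPath s₀ i s x t j = s k := by
  unfold mkPath
  rw [dif_neg h0, dif_pos h1]
  congr 1
  apply Fin.ext
  show (j : ℕ) - 1 = (k : ℕ)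
  omega

private lemma restr_mkPath_self {n : ℕ} (s₀ : ℝ) (i : Fin n) (s : Fin i → ℝ) (x : ℝ)
    (t : Fin (n - ((i : ℕ) + 1)) → ℝ) :
    restr i (mkPath s₀ i s x t) = s := by
  funext k
  exact mkPath_eq_s s₀ i s x t
    ⟨(k : ℕ) + 1, by have := k.isLt; have := i.isLt; omega⟩
    (Nat.succ_ne_zero _) (show (k : ℕ) + 1 ≤ (i : ℕ) by have := k.isLt; omega) k rfl

private lemma restr_mkPath_snoc {n : ℕ} (s₀ : ℝ) (i : Fin n) (s : Fin i → ℝ) (x : ℝ)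
    (t : Fin (n - ((i : ℕ) + 1)) → ℝ) (h : (i : ℕ) + 1 < n) :
    restr ⟨(i : ℕ) + 1, h⟩ (mkPath s₀ i s x t) = Fin.snoc s x := by
  funext k
  induction k using Fin.lastCases with
  | last =>
    rw [Fin.snoc_last]
    exact mkPath_val_succ s₀ i s x t ⟨(i : ℕ) + 1, by omega⟩ rfl
  | cast k =>
    rw [Fin.snoc_castSucc]
    exact mkPath_eq_s s₀ i s x t
      ⟨(k : ℕ) + 1, by have := k.isLt; have := i.isLt; omega⟩
      (Nat.succ_ne_zero _) (show (k : ℕ) + 1 ≤ (i : ℕ) by have := k.isLt; omega) k rfl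

private lemma beta_last_zero {n : ℕ} (β : (i : Fin (n + 1)) → (Fin i → ℝ) → ℝ)
    (h0 : ∀ s, β (Fin.last n) s = 0) (m : ℕ) (hm : m = n) (hlt : m < n + 1)
    (u : Fin m → ℝ) : β ⟨m, hlt⟩ u = 0 := by
  subst hm; exact h0 u



private lemma key_step
    {n : ℕ} {s₀ : ℝ} (hs₀ : 0 < s₀)
    (P : Set (Path n)) (G : (Fin n → ℝ) → EReal)
    (β : (i : Fin (n + 1)) → (Fin i → ℝ) → ℝ) (hβ : IsBetaFamily s₀ P G β)
    (X : Static n) (D : Dyn n) (hD : D.Nonneg)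
    (hsuper : ∀ ω ∈ P,
      G (tailCoords ω) ≤ ((Static.putPayoff X ω + D.gains ω : ℝ) : EReal))
    (i : Fin n) (s : Fin i → ℝ) (hs : ∀ k, 0 ≤ s k)
    (hnext : ∀ (h : (i : ℕ) + 1 < n) (x : ℝ), 0 ≤ x →
      β ⟨(i : ℕ) + 1, by omega⟩ (Fin.snoc s x) ≤ D.pos ⟨(i : ℕ) + 1, h⟩ (Fin.snoc s x)) :
    β ⟨(i : ℕ), by have := i.isLt; omega⟩ s ≤ D.pos i s := by
  classical
  haveI : Nonempty (Fin n) := ⟨i⟩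
  have hΔ : 0 ≤ D.pos i s := hD i s
  obtain ⟨Cd, hCd⟩ : ∃ Cd : ℝ, ∀ (j : Fin n) (y : Fin j → ℝ), |D.pos j y| ≤ Cd := by
    refine ⟨Finset.univ.sup' Finset.univ_nonempty (fun j : Fin n => (D.bdd j).choose), ?_⟩
    intro j y
    exact le_trans ((D.bdd j).choose_spec y) (Finset.le_sup' (fun j : Fin n => (D.bdd j).choose) (Finset.mem_univ j))
  have hCd0 : 0 ≤ Cd := le_trans (abs_nonneg _) (hCd i s)
  set Cp := |X.const| + ∑ k, |X.coeff k| * X.strike k with hCpdef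
  have hCp0 : 0 ≤ Cp := add_nonneg (abs_nonneg _)
    (Finset.sum_nonneg fun k _ => mul_nonneg (abs_nonneg _) (X.strike_nonneg k))
  have hpay : ∀ ω : Path n, (∀ j, 0 ≤ ω j) → Static.putPayoff X ω ≤ Cp := by
    intro ω hω
    refine add_le_add (le_abs_self _) (Finset.sum_le_sum fun k _ => ?_)
    have h1 : (0:ℝ) ≤ max (X.strike k - ω (X.idx k).succ) 0 := le_max_right _ _
    have h2 : max (X.strike k - ω (X.idx k).succ) 0 ≤ X.strike k :=
      max_le (by linarith [hω (X.idx k).succ]) (X.strike_nonneg k)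
    calc X.coeff k * max (X.strike k - ω (X.idx k).succ) 0
        ≤ |X.coeff k| * max (X.strike k - ω (X.idx k).succ) 0 :=
          mul_le_mul_of_nonneg_right (le_abs_self _) h1
      _ ≤ |X.coeff k| * X.strike k := mul_le_mul_of_nonneg_left h2 (abs_nonneg _)
  rw [← EReal.coe_le_coe_iff]
  refine le_trans (le_of_eq (hβ.2 i s hs)) ?_
  refine max_le (EReal.coe_nonneg.mpr hΔ) (iSup_le fun t => iSup_le fun ht => ?_)
  set B := s₀ + (∑ k, s k) + ∑ k, t k with hBdef
  have hB0 : 0 ≤ B := by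
    have h1 : 0 ≤ ∑ k, s k := Finset.sum_nonneg fun k _ => hs k
    have h2 : 0 ≤ ∑ k, t k := Finset.sum_nonneg fun k _ => ht k
    rw [hBdef]; linarith [hs₀.le]
  set C := Cp + (n : ℝ) * (Cd * B) with hCdef
  have hC0 : 0 ≤ C := by
    rw [hCdef]
    exact add_nonneg hCp0 (mul_nonneg (Nat.cast_nonneg n) (mul_nonneg hCd0 hB0))
  have htend : Filter.Tendsto (fun x : ℝ => ((C / x + D.pos i s : ℝ) : EReal)) Filter.atTop
      (nhds ((D.pos i s : ℝ) : EReal)) := by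
    rw [EReal.tendsto_coe]
    have h0 : Filter.Tendsto (fun x : ℝ => C / x) Filter.atTop (nhds 0) :=
      Filter.Tendsto.div_atTop tendsto_const_nhds Filter.tendsto_id
    simpa using h0.add_const (D.pos i s)
  have hev : (fun x : ℝ =>
      if mkPath s₀ i s x t ∈ P then
        ((β ⟨(i : ℕ) + 1, by have := i.isLt; omega⟩ (Fin.snoc s x) : ℝ) : EReal)
          + G (tailCoords (mkPath s₀ i s x t)) * ((x⁻¹ : ℝ) : EReal)
      else 0) ≤ᶠ[Filter.atTop]
      (fun x : ℝ => ((C / x + D.pos i s : ℝ) : EReal)) := by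
    filter_upwards [Filter.eventually_ge_atTop (1:ℝ)] with x hx1
    have hx0 : (0:ℝ) < x := lt_of_lt_of_le one_pos hx1
    by_cases hP : mkPath s₀ i s x t ∈ P
    swap
    · rw [if_neg hP]
      exact EReal.coe_nonneg.mpr (add_nonneg (div_nonneg hC0 hx0.le) hΔ)
    rw [if_pos hP]
    set ω := mkPath s₀ i s x t with hωdef
    set bx := β ⟨(i : ℕ) + 1, by have := i.isLt; omega⟩ (Fin.snoc s x) with hbxdef
    have hωnn : ∀ j, 0 ≤ ω j := by
      rw [hωdef]; exact fun j => mkPath_nonneg hs₀.le i hs hx0.le ht j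
    have hωle : ∀ j : Fin (n+1), (j : ℕ) ≠ (i : ℕ) + 1 → ω j ≤ B := by
      rw [hωdef, hBdef]; exact fun j hj => mkPath_le i hs x ht hs₀.le j hj
    have hG1 := hsuper ω hP
    have hmul : G (tailCoords ω) * ((x⁻¹ : ℝ) : EReal)
        ≤ (((Static.putPayoff X ω + D.gains ω) * x⁻¹ : ℝ) : EReal) := by
      rw [EReal.coe_mul]
      exact mul_le_mul_of_nonneg_right hG1 (EReal.coe_nonneg.mpr (inv_nonneg.mpr hx0.le))
    have hterm : ∀ j : Fin n,
        D.pos j (restr j ω) * (ω j.succ - ω j.castSucc) ≤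
          Cd * B + ((if j = i then D.pos i s * x else 0) +
            (if (j : ℕ) = (i : ℕ) + 1 then -(bx * x) else 0)) := by
      intro j
      by_cases hji : (j : ℕ) = (i : ℕ)
      · have hj : j = i := Fin.ext hji
        subst hj
        rw [if_pos rfl, if_neg (by omega)]
        have h1 : restr j ω = s := by rw [hωdef]; exact restr_mkPath_self s₀ j s x t
        have h2 : ω j.succ = x := by
          rw [hωdef]; exact mkPath_val_succ s₀ j s x t j.succ rfl
        rw [h1, h2]
        have h3 : 0 ≤ ω j.castSucc := hωnn _
        nlinarith [mul_nonneg (hD j s) h3, mul_nonneg hCd0 hB0]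
      by_cases hji1 : (j : ℕ) = (i : ℕ) + 1
      · have hlt : (i : ℕ) + 1 < n := hji1 ▸ j.isLt
        have hj : j = ⟨(i : ℕ) + 1, hlt⟩ := Fin.ext hji1
        subst hj
        rw [if_neg (by intro hh; exact hji (by rw [hh])), if_pos rfl]
        have h1 : restr (⟨(i : ℕ) + 1, hlt⟩ : Fin n) ω = Fin.snoc s x := by
          rw [hωdef]; exact restr_mkPath_snoc s₀ i s x t hlt
        have h2 : ω (⟨(i : ℕ) + 1, hlt⟩ : Fin n).succ = t ⟨0, by omega⟩ := by
          rw [hωdef]; exact mkPath_val_two s₀ i s x t _ rfl hlt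
        have h3 : ω (Fin.castSucc (⟨(i : ℕ) + 1, hlt⟩ : Fin n)) = x := by
          rw [hωdef]; exact mkPath_val_succ s₀ i s x t _ rfl
        rw [h1, h2, h3]
        have ht0 : 0 ≤ t ⟨0, by omega⟩ := ht _
        have ht0B : t ⟨0, by omega⟩ ≤ B := by
          have h4 : 0 ≤ ∑ k, s k := Finset.sum_nonneg fun k _ => hs k
          have h5 := Finset.single_le_sum (fun k (_ : k ∈ Finset.univ) => ht k)
            (Finset.mem_univ (⟨0, by omega⟩ : Fin (n - ((i : ℕ) + 1))))
          rw [hBdef]; linarith [hs₀.le]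
        have hd2 : D.pos (⟨(i : ℕ) + 1, hlt⟩ : Fin n) (Fin.snoc s x) ≤ Cd :=
          (abs_le.mp (hCd _ _)).2
        have hdnn : 0 ≤ D.pos (⟨(i : ℕ) + 1, hlt⟩ : Fin n) (Fin.snoc s x) := hD _ _
        have hbxle : bx ≤ D.pos (⟨(i : ℕ) + 1, hlt⟩ : Fin n) (Fin.snoc s x) :=
          hnext hlt x hx0.le
        have e1 : D.pos (⟨(i : ℕ) + 1, hlt⟩ : Fin n) (Fin.snoc s x) * t ⟨0, by omega⟩
            ≤ Cd * B := mul_le_mul hd2 ht0B ht0 hCd0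
        have e2 : bx * x ≤ D.pos (⟨(i : ℕ) + 1, hlt⟩ : Fin n) (Fin.snoc s x) * x :=
          mul_le_mul_of_nonneg_right hbxle hx0.le
        nlinarith [e1, e2]
      · rw [if_neg (by intro hh; exact hji (by rw [hh])), if_neg hji1]
        have hp : ω j.succ ≤ B := hωle _ (by simp only [Fin.val_succ]; omega)
        have hpnn : 0 ≤ ω j.succ := hωnn _
        have hq : 0 ≤ ω j.castSucc := hωnn _
        have hd2 : D.pos j (restr j ω) ≤ Cd := (abs_le.mp (hCd _ _)).2
        have hdnn : 0 ≤ D.pos j (restr j ω) := hD _ _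
        nlinarith [mul_nonneg hdnn hq, mul_le_mul hd2 hp hpnn hCd0]
    have hgains : D.gains ω ≤ (n : ℝ) * (Cd * B) + (D.pos i s * x + -(bx * x)) := by
      have hu : ∑ j : Fin n, (if j = i then D.pos i s * x else 0) = D.pos i s * x := by
        simp
      have hv : ∑ j : Fin n, (if (j : ℕ) = (i : ℕ) + 1 then -(bx * x) else 0)
          = -(bx * x) := by
        by_cases hc : (i : ℕ) + 1 < n
        · have he : ∀ j : Fin n, (if (j : ℕ) = (i : ℕ) + 1 then -(bx * x) else 0)
              = (if j = (⟨(i : ℕ) + 1, hc⟩ : Fin n) then -(bx * x) else 0) := by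
            intro j
            by_cases hj : (j : ℕ) = (i : ℕ) + 1
            · rw [if_pos hj, if_pos (Fin.ext hj)]
            · rw [if_neg hj, if_neg (fun hh => hj (by rw [hh]))]
          rw [Finset.sum_congr rfl fun j _ => he j]
          simp
        · have hz : bx = 0 := beta_last_zero β hβ.1 ((i : ℕ) + 1)
            (by have := i.isLt; omega) (by have := i.isLt; omega) (Fin.snoc s x)
          rw [hz]
          simp
      calc D.gains ω = ∑ j : Fin n, D.pos j (restr j ω) * (ω j.succ - ω j.castSucc) := rfl
        _ ≤ ∑ j : Fin n, (Cd * B + ((if j = i then D.pos i s * x else 0) +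
              (if (j : ℕ) = (i : ℕ) + 1 then -(bx * x) else 0))) :=
            Finset.sum_le_sum fun j _ => hterm j
        _ = (n : ℝ) * (Cd * B) + (D.pos i s * x + -(bx * x)) := by
            rw [Finset.sum_add_distrib, Finset.sum_add_distrib, hu, hv, Finset.sum_const,
              Finset.card_univ, Fintype.card_fin, nsmul_eq_mul]
    have hA : Static.putPayoff X ω + D.gains ω ≤ C + (D.pos i s - bx) * x := by
      have h1 := hpay ω hωnn
      have h2 : (D.pos i s - bx) * x = D.pos i s * x + -(bx * x) := by ring
      rw [hCdef, h2]
      linarith [hgains]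
    have hfinal : bx + (Static.putPayoff X ω + D.gains ω) * x⁻¹ ≤ C / x + D.pos i s := by
      have h1 : (Static.putPayoff X ω + D.gains ω) * x⁻¹ ≤ (C + (D.pos i s - bx) * x) * x⁻¹ :=
        mul_le_mul_of_nonneg_right hA (inv_nonneg.mpr hx0.le)
      have h2 : (C + (D.pos i s - bx) * x) * x⁻¹ = C / x + D.pos i s - bx := by
        field_simp
        ring
      linarith
    refine le_trans (add_le_add_right hmul _) ?_
    rw [← EReal.coe_add]
    exact EReal.coe_le_coe_iff.mpr hfinal
  exact le_trans (Filter.limsup_le_limsup hev) (le_of_eq htend.limsup_eq)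


/-- lower bound on dynamic positions in any put-based superhedge:
if the semi-static put-based strategy `(X, Δ)` (with nonnegative dynamic positions)
superhedges `G` on `𝔓`, then `Δ_i ≥ β_i` on `ℝ₊^i` for every `i`, where `(β_i)` is
the recursively defined family. -/
theorem delta_dominates_beta
    {n : ℕ} (hn : 1 ≤ n) {s₀ : ℝ} (hs₀ : 0 < s₀)
    (P : Set (Path n)) (hPsub : P ⊆ Omega n s₀) (hPclosed : IsClosed P)
    (G : (Fin n → ℝ) → EReal) (hGtop : ∀ s, G s ≠ ⊤)
    (K : ℝ) (hG : ∀ s : Fin n → ℝ, (∀ i, 0 ≤ s i) → G s ≤ ((K * (1 + ∑ i, s i) : ℝ) : EReal))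
    (β : (i : Fin (n + 1)) → (Fin i → ℝ) → ℝ) (hβ : IsBetaFamily s₀ P G β)
    (X : Static n) (D : Dyn n) (hD : D.Nonneg)
    (hsuper : ∀ ω ∈ P,
      G (tailCoords ω) ≤ ((Static.putPayoff X ω + D.gains ω : ℝ) : EReal)) :
    ∀ (i : Fin n) (s : Fin i → ℝ), (∀ k, 0 ≤ s k) →
      β ⟨(i : ℕ), by have := i.isLt; omega⟩ s ≤ D.pos i s := by
  have main : ∀ d : ℕ, ∀ i : Fin n, n - (i : ℕ) ≤ d → ∀ s : Fin i → ℝ, (∀ k, 0 ≤ s k) →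
      β ⟨(i : ℕ), by have := i.isLt; omega⟩ s ≤ D.pos i s := by
    intro d
    induction d with
    | zero => intro i hi; exact absurd hi (by have := i.isLt; omega)
    | succ d ih =>
      intro i hi s hs
      refine key_step hs₀ P G β hβ X D hD hsuper i s hs ?_
      intro h x hx
      refine ih ⟨(i : ℕ) + 1, h⟩ (show n - ((i : ℕ) + 1) ≤ d by omega) (Fin.snoc s x) ?_
      intro k
      induction k using Fin.lastCases with
      | last => simpa using hx
      | cast k => simpa using hs k
  intro i s hs
  exact main (n - (i : ℕ)) i le_rfl s hs


end RobustFin
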